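/- Let s be a real number with 1/2 < s < 1. Then the supremum of log(y⁻¹ − 1)/(y − x) over all pairs (x, y) with 1/2 ≤ x ≤ s and 0 < y ≤ 1 − x and (x, y) ≠ (1/2, 1/2) equals −2. -/

import Mathlib

open Set

lemma artanh_aux (t : ℝ) (ht0 : 0 < t) (ht1 : t < 1) :
    2 * t ≤ Real.log ((1 + t) / (1 - t)) := by
  set f : ℝ → ℝ := fun u => Real.log (1 + u) - Real.log (1 - u) - 2 * u with hf
  have hderiv : ∀ u : ℝ, -1 < u → u < 1 →
      HasDerivAt f ((1 + u)⁻¹ * 1 - (1 - u)⁻¹ * (-1) - 2 * 1) u := by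
    intro u hu1 hu2
    have hA : HasDerivAt (fun v : ℝ => 1 + v) 1 u := by
      simpa using (hasDerivAt_id u).const_add (1 : ℝ)
    have hB : HasDerivAt (fun v : ℝ => 1 - v) (-1) u := by
      exact (hasDerivAt_id' u).const_sub (1 : ℝ)
    have h1 := (Real.hasDerivAt_log (by linarith : (1 : ℝ) + u ≠ 0)).comp u hA
    have h2 := (Real.hasDerivAt_log (by linarith : (1 : ℝ) - u ≠ 0)).comp u hB
    have h3 : HasDerivAt (fun v : ℝ => 2 * v) (2 * 1) u := (hasDerivAt_id u).const_mul 2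
    exact (h1.sub h2).sub h3
  have hmono : StrictMonoOn f (Set.Ico (0 : ℝ) 1) := by
    apply strictMonoOn_of_deriv_pos (convex_Ico 0 1)
    · intro u hu
      exact ((hderiv u (by linarith [hu.1]) hu.2).differentiableAt).continuousAt.continuousWithinAt
    · intro u hu
      rw [interior_Ico] at hu
      have h := hderiv u (by linarith [hu.1]) hu.2
      rw [h.deriv]
      have h1 : (0 : ℝ) < 1 + u := by linarith [hu.1]
      have h2 : (0 : ℝ) < 1 - u := by linarith [hu.2]
      have h3 : (0 : ℝ) < u := hu.1
      have e : (1 + u)⁻¹ * 1 - (1 - u)⁻¹ * (-1) - 2 * 1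
          = 2 * u ^ 2 / ((1 + u) * (1 - u)) := by
        field_simp
        ring
      rw [e]
      positivity
  have h0 : f 0 = 0 := by simp [hf]
  have hlt : f 0 < f t :=
    hmono (by constructor <;> norm_num) (by constructor <;> linarith) ht0
  rw [h0] at hlt
  have hlog : Real.log ((1 + t) / (1 - t)) = Real.log (1 + t) - Real.log (1 - t) :=
    Real.log_div (by linarith) (by linarith)
  rw [hlog]
  have : 2 * t < Real.log (1 + t) - Real.log (1 - t) := by
    have := hlt
    simp only [hf] at this
    linarith
  linarith

theorem sup_region_minus_eq_neg_two (s : ℝ) (hs : 1 / 2 < s) (hs1 : s < 1) :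
    sSup {r : ℝ | ∃ x y : ℝ, 1 / 2 ≤ x ∧ x ≤ s ∧ 0 < y ∧ y ≤ 1 - x ∧
      (x, y) ≠ (1 / 2, 1 / 2) ∧ r = Real.log (y⁻¹ - 1) / (y - x)} = -2 := by
  apply csSup_eq_of_forall_le_of_forall_lt_exists_gt
  · -- nonempty
    refine ⟨Real.log ((1/4 : ℝ)⁻¹ - 1) / (1/4 - 1/2), 1/2, 1/4, by norm_num, le_of_lt hs,
      by norm_num, by norm_num, by norm_num, rfl⟩
  · -- every element ≤ -2
    rintro r ⟨x, y, hx1, hxs, hy0, hy1, hne, rfl⟩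
    -- y < x
    have hylt : y < x := by
      have hle : y ≤ x := le_trans hy1 (by linarith : 1 - x ≤ x)
      rcases lt_or_eq_of_le hle with h | h
      · exact h
      · exfalso
        have hx : x = 1/2 := by linarith [hy1]
        have hy : y = 1/2 := by linarith
        exact hne (by rw [hx, hy])
    have hyx : y - x < 0 := by linarith
    have hyhalf : y < 1/2 := by linarith
    -- key log bound
    set t : ℝ := 1 - 2 * y with htdef
    have ht0 : 0 < t := by simp [htdef]; linarith
    have ht1 : t < 1 := by simp [htdef]; linarith
    have heq : y⁻¹ - 1 = (1 + t) / (1 - t) := by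
      rw [htdef]
      field_simp
      ring
    have hlog : 2 * t ≤ Real.log (y⁻¹ - 1) := by
      rw [heq]; exact artanh_aux t ht0 ht1
    have hxle : x - y ≤ t := by simp [htdef]; linarith
    rw [div_le_iff_of_neg hyx]
    nlinarith [hlog]
  · -- approach -2
    intro w hw
    have hw2 : w < -2 := hw
    have hwneg : w < 0 := by linarith
    set m : ℝ := max (-1 / w) (1 - s) with hm
    have hm1 : -1 / w < 1/2 := by
      rw [div_lt_iff_of_neg hwneg]
      linarith
    have hm0 : 0 < -1 / w := by
      apply div_pos_of_neg_of_neg <;> linarith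
    have hmlt : m < 1/2 := by
      apply max_lt hm1; linarith
    have hmpos : 0 < m := lt_of_lt_of_le hm0 (le_max_left _ _)
    set y : ℝ := (m + 1/2) / 2 with hy
    have hy0 : 0 < y := by rw [hy]; linarith
    have hyhalf : y < 1/2 := by rw [hy]; linarith
    have hym : m < y := by rw [hy]; linarith
    set x : ℝ := 1 - y with hx
    have hx1 : 1/2 ≤ x := by rw [hx]; linarith
    have hxs : x ≤ s := by
      have : 1 - s ≤ m := le_max_right _ _
      rw [hx]; linarith
    refine ⟨Real.log (y⁻¹ - 1) / (y - x), ⟨x, y, hx1, hxs, hy0, by rw [hx]; linarith, ?_, rfl⟩, ?_⟩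
    · intro h
      have : y = 1/2 := by
        have := congrArg Prod.snd h
        simpa using this
      linarith
    · -- w < log(y⁻¹-1)/(y-x)
      have hyx : y - x < 0 := by rw [hx]; linarith
      rw [lt_div_iff_of_neg hyx]
      -- need: Real.log (y⁻¹ - 1) < w * (y - x)
      have hpos : 0 < y⁻¹ - 1 := by
        have : 1 < y⁻¹ := (one_lt_inv₀ hy0).mpr (by linarith)
        linarith
      have hlog : Real.log (y⁻¹ - 1) ≤ (y⁻¹ - 1) - 1 :=
        by linarith [Real.log_le_sub_one_of_pos hpos]
      have hinv : y⁻¹ < -w := by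
        rw [inv_lt_comm₀ (by positivity) (by linarith : (0:ℝ) < -w)]
        have : -1 / w < y := lt_of_le_of_lt (le_max_left _ _) hym
        calc (-w)⁻¹ = -1 / w := by rw [inv_eq_one_div]; ring
          _ < y := this
      have hyb : y - x = -(1 - 2*y) := by rw [hx]; ring
      have ht : 0 < 1 - 2*y := by linarith
      -- y⁻¹ - 2 = (1-2y)/y ; want (1-2y)/y < -w*(1-2y)
      have key : y⁻¹ - 2 < (-w) * (1 - 2*y) := by
        have e : y⁻¹ - 2 = (1 - 2*y) * y⁻¹ + (y * y⁻¹ - 1) * 2 := by ring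
        have hyy : y * y⁻¹ = 1 := mul_inv_cancel₀ (ne_of_gt hy0)
        rw [e, hyy]
        have := mul_lt_mul_of_pos_left hinv ht
        linarith
      calc Real.log (y⁻¹ - 1) ≤ y⁻¹ - 2 := by linarith
        _ < (-w) * (1 - 2*y) := key
        _ = w * (y - x) := by rw [hyb]; ring
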